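/- arXiv:1502.06155 — 3 statements merged into one kernel-verified Lean document; each statement's English description precedes it below -/
import Mathlib

section
/- Suppose Ω = {ω₁,…,ω_m} is a finite set, Σ is the power set of Ω, and P₀({ωᵢ}) > 0 for every i. Let ℛ be a coherent risk measure on L² with risk envelope 𝒬. Then ℛ is averse if and only if 1 is a relative interior point of 𝒬 relative to 𝒫, i.e. if and only if there exists δ > 0 such that every Q ∈ 𝒫 with ‖Q − 1‖₂ < δ belongs to 𝒬. -/
open MeasureTheory Filter Topology

noncomputable section

variable {Ω : Type*} [MeasurableSpace Ω] (μ : Measure Ω) [IsProbabilityMeasure μ]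

/-- The space `L²(Ω, Σ, P₀; ℝ)`. -/
abbrev L2 := Lp ℝ 2 μ

/-- Expectation of an `L²` random variable. -/
def expect (X : L2 μ) : ℝ := ∫ ω, X ω ∂μ

/-- `E[X Q]`. -/
def pairing (X Q : L2 μ) : ℝ := ∫ ω, X ω * Q ω ∂μ

/-- The set of densities `𝒫 = {Q ∈ L² : Q ≥ 0 a.s., E[Q] = 1}`. -/
def densities : Set (L2 μ) := {Q | (0 : Ω → ℝ) ≤ᵐ[μ] ⇑Q ∧ ∫ ω, Q ω ∂μ = 1}

/-- The constant random variable as an element of `L²`. -/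
def constL2 (c : ℝ) : L2 μ := (memLp_const c).toLp (fun _ => c)

/-- A coherent risk measure (values in `(-∞, +∞]`, i.e. never `⊥`), axioms (A1)–(A5). -/
structure IsCoherent (ℛ : L2 μ → EReal) : Prop where
  nonbot : ∀ X : L2 μ, ℛ X ≠ ⊥
  const : ∀ C : ℝ, ℛ (constL2 μ C) = (C : EReal)
  convex : ∀ X X' : L2 μ, ∀ l : ℝ, 0 ≤ l → l ≤ 1 →
    ℛ ((1 - l) • X + l • X') ≤ ((1 - l : ℝ) : EReal) * ℛ X + (l : EReal) * ℛ X'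
  mono : ∀ X X' : L2 μ, (⇑X ≤ᵐ[μ] ⇑X') → ℛ X ≤ ℛ X'
  closed : ∀ (Xk : ℕ → L2 μ) (X : L2 μ),
    Tendsto (fun k => ‖Xk k - X‖) atTop (𝓝 0) → (∀ k, ℛ (Xk k) ≤ 0) → ℛ X ≤ 0
  posHom : ∀ (X : L2 μ) (l : ℝ), 0 < l → ℛ (l • X) = (l : EReal) * ℛ X

/-- A risk envelope: a nonempty closed convex subset of `𝒫`. -/
def IsRiskEnvelope (𝒬 : Set (L2 μ)) : Prop :=
  𝒬.Nonempty ∧ IsClosed 𝒬 ∧ Convex ℝ 𝒬 ∧ 𝒬 ⊆ densities μ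

/-- `ℛ` has risk envelope `𝒬`: `ℛ(X) = sup_{Q ∈ 𝒬} E[XQ]`. -/
def HasEnvelope (ℛ : L2 μ → EReal) (𝒬 : Set (L2 μ)) : Prop :=
  ∀ X : L2 μ, ℛ X = ⨆ Q ∈ 𝒬, ((pairing μ X Q : ℝ) : EReal)

/-- Inf-convolution of finitely many functionals. -/
def infConv {n : ℕ} (ℛ : Fin n → L2 μ → EReal) (X : L2 μ) : EReal :=
  ⨅ (Y : Fin n → L2 μ) (_ : ∑ i, Y i = X), ∑ i, ℛ i (Y i)

/-- The lower semicontinuous hull (largest lsc minorant) of an `EReal`-valued function. -/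
def lscHull {α : Type*} [TopologicalSpace α] (f : α → EReal) (x : α) : EReal :=
  ⨆ g ∈ {g : α → EReal | LowerSemicontinuous g ∧ ∀ y, g y ≤ f y}, g x

/-! ### Auxiliary lemmas for `stmt_14` -/

open scoped RealInnerProductSpace

set_option linter.unusedSectionVars false

/-- When every singleton has positive measure, a.e. equality implies equality. -/
lemma aux14_ae_eq (hatoms : ∀ ω : Ω, 0 < μ {ω}) {f g : Ω → ℝ} (h : f =ᵐ[μ] g) : f = g := by
  funext ω
  by_contra hne
  have h0 : μ {x | ¬ f x = g x} = 0 := ae_iff.mp h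
  have h1 : μ {ω} ≤ μ {x | ¬ f x = g x} :=
    measure_mono (Set.singleton_subset_iff.mpr hne)
  exact absurd (h1.trans_eq h0) (hatoms ω).not_ge

lemma aux14_coe_const (hatoms : ∀ ω : Ω, 0 < μ {ω}) (c : ℝ) :
    ⇑(constL2 μ c) = fun _ => c :=
  aux14_ae_eq μ hatoms ((memLp_const c).coeFn_toLp)

lemma aux14_pairing (X Q : L2 μ) : pairing μ X Q = ⟪X, Q⟫ := by
  rw [L2.inner_def]
  simp [pairing, RCLike.inner_apply, conj_trivial]
  exact integral_congr_ae (Filter.Eventually.of_forall fun ω => mul_comm _ _)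

lemma aux14_inner_one (hatoms : ∀ ω : Ω, 0 < μ {ω}) (X : L2 μ) :
    ⟪X, constL2 μ 1⟫ = ∫ ω, X ω ∂μ := by
  rw [L2.inner_def]
  simp [aux14_coe_const μ hatoms, RCLike.inner_apply, conj_trivial]

lemma aux14_one_inner (hatoms : ∀ ω : Ω, 0 < μ {ω}) {Q : L2 μ} (hQ : Q ∈ densities μ) :
    ⟪constL2 μ 1, Q⟫ = 1 := by
  rw [L2.inner_def]
  simpa [aux14_coe_const μ hatoms, RCLike.inner_apply, conj_trivial] using hQ.2

lemma aux14_one_mem (hatoms : ∀ ω : Ω, 0 < μ {ω}) : constL2 μ 1 ∈ densities μ := by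
  refine ⟨Filter.Eventually.of_forall fun ω => ?_, ?_⟩
  · rw [aux14_coe_const μ hatoms]; exact zero_le_one
  · simp [aux14_coe_const μ hatoms]

lemma aux14_const_smul (hatoms : ∀ ω : Ω, 0 < μ {ω}) (c : ℝ) :
    constL2 μ c = c • constL2 μ 1 := by
  refine Lp.ext (Filter.EventuallyEq.of_eq ?_)
  have h1 : ⇑(c • constL2 μ 1) = c • ⇑(constL2 μ 1) := aux14_ae_eq μ hatoms (Lp.coeFn_smul _ _)
  rw [aux14_coe_const μ hatoms, h1, aux14_coe_const μ hatoms]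
  funext ω; simp

lemma aux14_findim [Fintype Ω] (hatoms : ∀ ω : Ω, 0 < μ {ω}) :
    FiniteDimensional ℝ (L2 μ) := by
  let T : L2 μ →ₗ[ℝ] (Ω → ℝ) :=
    { toFun := fun X => ⇑X
      map_add' := fun X Y => aux14_ae_eq μ hatoms (Lp.coeFn_add X Y)
      map_smul' := fun c X => aux14_ae_eq μ hatoms (Lp.coeFn_smul c X) }
  refine FiniteDimensional.of_injective T fun X Y h => ?_
  exact Lp.ext (Filter.EventuallyEq.of_eq h)

set_option maxHeartbeats 2000000

/-- on a finite probability space where `Σ` is the power set and every atom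
has positive probability, a coherent risk measure `ℛ` with risk envelope `𝒬` is averse if
and only if `1` is a relative interior point of `𝒬` relative to `𝒫`. -/
theorem stmt_14 [Fintype Ω]
    (hsigma : ∀ s : Set Ω, MeasurableSet s)
    (hatoms : ∀ ω : Ω, 0 < μ {ω})
    (ℛ : L2 μ → EReal) (𝒬 : Set (L2 μ))
    (hcoh : IsCoherent μ ℛ) (hRE : IsRiskEnvelope μ 𝒬) (henv : HasEnvelope μ ℛ 𝒬) :
    (∀ X : L2 μ, (¬ ∃ c : ℝ, ⇑X =ᵐ[μ] fun _ => c) →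
        ((∫ ω, X ω ∂μ : ℝ) : EReal) < ℛ X) ↔
      ∃ δ : ℝ, 0 < δ ∧ ∀ Q ∈ densities μ, ‖Q - constL2 μ 1‖ < δ → Q ∈ 𝒬 := by
  set I : L2 μ := constL2 μ 1 with hIdef
  have hIc : ⇑I = fun _ => (1:ℝ) := aux14_coe_const μ hatoms 1
  have hIdens : I ∈ densities μ := aux14_one_mem μ hatoms
  have hII : ⟪I, I⟫ = 1 := aux14_one_inner μ hatoms hIdens
  constructor
  · -- averse → relative interior
    intro haverse
    by_contra hno
    push_neg at hno
    have hQk : ∀ k : ℕ, ∃ Q, Q ∈ densities μ ∧ ‖Q - I‖ < 1/((k:ℝ)+1) ∧ Q ∉ 𝒬 := by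
      intro k
      obtain ⟨Q, hQd, h1, h2⟩ := hno (1/((k:ℝ)+1)) (by positivity)
      exact ⟨Q, hQd, h1, h2⟩
    choose Qs hQd hQn hQnot using hQk
    -- separation
    have hsep : ∀ k : ℕ, ∃ Z : L2 μ, ‖Z‖ = 1 ∧ ⟪Z, I⟫ = 0 ∧
        ∀ Q ∈ 𝒬, ⟪Z, Q⟫ < 1/((k:ℝ)+1) := by
      intro k
      obtain ⟨f, u, hfu, hux⟩ :=
        geometric_hahn_banach_closed_point hRE.2.2.1 hRE.2.1 (hQnot k)
      set X : L2 μ := (InnerProductSpace.toDual ℝ (L2 μ)).symm f with hXdef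
      have hX : ∀ V : L2 μ, ⟪X, V⟫ = f V := fun V => InnerProductSpace.toDual_symm_apply
      set m : ℝ := ⟪X, I⟫ with hmdef
      set W : L2 μ := X - m • I with hWdef
      have hWd : ∀ Q ∈ densities μ, ⟪W, Q⟫ = f Q - m := by
        intro Q hQ
        rw [hWdef, inner_sub_left, real_inner_smul_left, aux14_one_inner μ hatoms hQ, hX]
        ring
      have hWI : ⟪W, I⟫ = 0 := by
        rw [hWdef, inner_sub_left, real_inner_smul_left, hII, ← hmdef]; ring
      have hWne : W ≠ 0 := by
        intro h0
        obtain ⟨Q0, hQ0⟩ := hRE.1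
        have e1 : f Q0 - m = 0 := by rw [← hWd Q0 (hRE.2.2.2 hQ0), h0, inner_zero_left]
        have e2 : f (Qs k) - m = 0 := by rw [← hWd (Qs k) (hQd k), h0, inner_zero_left]
        have := (hfu Q0 hQ0).trans hux
        linarith
      have hWpos : (0:ℝ) < ‖W‖ := norm_pos_iff.mpr hWne
      have hZnorm : ‖‖W‖⁻¹ • W‖ = 1 := by
        rw [norm_smul, norm_inv, norm_norm]; field_simp
      refine ⟨‖W‖⁻¹ • W, hZnorm, ?_, ?_⟩
      · rw [real_inner_smul_left, hWI]; ring
      · intro Q hQ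
        have h1 : ⟪‖W‖⁻¹ • W, Q⟫ < ⟪‖W‖⁻¹ • W, Qs k⟫ := by
          rw [real_inner_smul_left, real_inner_smul_left, hWd Q (hRE.2.2.2 hQ),
            hWd (Qs k) (hQd k)]
          have := (hfu Q hQ).trans hux
          have hinv : (0:ℝ) < ‖W‖⁻¹ := inv_pos.mpr hWpos
          nlinarith
        have h2 : ⟪‖W‖⁻¹ • W, Qs k⟫ = ⟪‖W‖⁻¹ • W, Qs k - I⟫ := by
          simp [inner_sub_right, real_inner_smul_left, hWI]
        have h3 : ⟪‖W‖⁻¹ • W, Qs k - I⟫ ≤ ‖Qs k - I‖ := by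
          calc ⟪‖W‖⁻¹ • W, Qs k - I⟫ ≤ ‖‖W‖⁻¹ • W‖ * ‖Qs k - I‖ := real_inner_le_norm _ _
            _ = ‖Qs k - I‖ := by rw [hZnorm, one_mul]
        calc ⟪‖W‖⁻¹ • W, Q⟫ < ⟪‖W‖⁻¹ • W, Qs k⟫ := h1
          _ ≤ ‖Qs k - I‖ := by rw [h2]; exact h3
          _ < 1/((k:ℝ)+1) := hQn k
    choose Zs hZ1 hZ2 hZ3 using hsep
    haveI := aux14_findim μ hatoms
    have hc : IsCompact (Metric.sphere (0 : L2 μ) 1) := isCompact_sphere _ _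
    have hmem : ∀ k, Zs k ∈ Metric.sphere (0 : L2 μ) 1 := by
      intro k; rw [mem_sphere_zero_iff_norm]; exact hZ1 k
    obtain ⟨Z, hZs, φ, hφ, hZt⟩ := hc.tendsto_subseq hmem
    have hZn : ‖Z‖ = 1 := mem_sphere_zero_iff_norm.mp hZs
    have hZI : ⟪Z, I⟫ = 0 := by
      have ht : Tendsto (fun j => ⟪(Zs ∘ φ) j, I⟫) atTop (𝓝 ⟪Z, I⟫) :=
        hZt.inner tendsto_const_nhds
      have ht0 : Tendsto (fun j : ℕ => ⟪(Zs ∘ φ) j, I⟫) atTop (𝓝 0) := by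
        simpa [Function.comp, hZ2] using (tendsto_const_nhds : Tendsto (fun _ : ℕ => (0:ℝ)) atTop (𝓝 0))
      exact tendsto_nhds_unique ht ht0
    have hbound : Tendsto (fun j : ℕ => 1/((φ j : ℝ)+1)) atTop (𝓝 0) := by
      refine squeeze_zero (fun j => by positivity) (fun j => ?_)
        tendsto_one_div_add_atTop_nhds_zero_nat
      have : (j:ℝ) + 1 ≤ (φ j : ℝ) + 1 := by
        have h := (hφ.le_apply : j ≤ φ j)
        have := (Nat.cast_le (α := ℝ)).mpr h
        linarith
      exact one_div_le_one_div_of_le (by positivity) this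
    have hZQ : ∀ Q ∈ 𝒬, ⟪Z, Q⟫ ≤ 0 := by
      intro Q hQ
      refine le_of_tendsto_of_tendsto (hZt.inner tendsto_const_nhds) hbound ?_
      exact Filter.Eventually.of_forall fun j => (hZ3 (φ j) Q hQ).le
    have hZnc : ¬ ∃ c : ℝ, ⇑Z =ᵐ[μ] fun _ => c := by
      rintro ⟨c, hc'⟩
      have hZc : ⇑Z = fun _ => c := aux14_ae_eq μ hatoms hc'
      have hint : ∫ ω, Z ω ∂μ = c := by rw [hZc]; simp
      have hc0 : c = 0 := by
        have := aux14_inner_one μ hatoms Z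
        rw [hZI, hint] at this; exact this.symm
      have : Z = 0 := by
        refine Lp.ext ?_
        rw [hZc, hc0]
        exact (Lp.coeFn_zero ℝ 2 μ).symm
      rw [this, norm_zero] at hZn
      exact one_ne_zero hZn.symm
    have hlt := haverse Z hZnc
    have hE : (∫ ω, Z ω ∂μ) = 0 := by rw [← aux14_inner_one μ hatoms Z]; exact hZI
    have hR : ℛ Z ≤ 0 := by
      rw [henv Z]
      refine iSup₂_le fun Q hQ => ?_
      rw [aux14_pairing]
      exact_mod_cast EReal.coe_nonpos.mpr (hZQ Q hQ)
    rw [hE] at hlt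
    have : (0 : EReal) < 0 := by
      calc (0 : EReal) = ((0:ℝ) : EReal) := by simp
        _ < ℛ Z := hlt
        _ ≤ 0 := hR
    exact absurd this (lt_irrefl _)
  · -- relative interior → averse
    rintro ⟨δ, hδ, hball⟩ X hXnc
    set m : ℝ := ∫ ω, X ω ∂μ with hmdef
    have hXI : ⟪X, I⟫ = m := aux14_inner_one μ hatoms X
    set Y : L2 μ := X - constL2 μ m with hYdef
    have hmI : ⟪constL2 μ m, I⟫ = m := by
      rw [aux14_inner_one μ hatoms, aux14_coe_const μ hatoms]; simp
    have hYI : ⟪Y, I⟫ = 0 := by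
      rw [hYdef, inner_sub_left, hXI, hmI]; ring
    have hYne : Y ≠ 0 := by
      intro h0
      refine hXnc ⟨m, ?_⟩
      have hXm : X = constL2 μ m := by
        have := sub_eq_zero.mp (hYdef ▸ h0)
        exact this
      rw [hXm, aux14_coe_const μ hatoms]
    have hYpos : (0:ℝ) < ‖Y‖ := norm_pos_iff.mpr hYne
    set Z : L2 μ := ‖Y‖⁻¹ • Y with hZdef
    have hZnorm : ‖Z‖ = 1 := by
      rw [hZdef, norm_smul, norm_inv, norm_norm]; field_simp
    have hZI : ⟪Z, I⟫ = 0 := by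
      rw [hZdef, real_inner_smul_left, hYI]; ring
    have hYc : ⇑Y = fun ω => X ω - m := by
      have h1 : ⇑Y = ⇑X - ⇑(constL2 μ m) := aux14_ae_eq μ hatoms (Lp.coeFn_sub X _)
      rw [h1, aux14_coe_const μ hatoms]; rfl
    have hZc : ⇑Z = fun ω => ‖Y‖⁻¹ * (X ω - m) := by
      have h1 : ⇑Z = ‖Y‖⁻¹ • ⇑Y := aux14_ae_eq μ hatoms (Lp.coeFn_smul _ _)
      rw [h1, hYc]; rfl
    obtain ⟨M, hM⟩ := Finite.exists_le fun ω => |Z ω|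
    set M' : ℝ := max M 0 with hM'def
    have hM'0 : (0:ℝ) ≤ M' := le_max_right _ _
    have hM' : ∀ ω, |Z ω| ≤ M' := fun ω => (hM ω).trans (le_max_left _ _)
    set ε : ℝ := min (δ/2) (1/(M'+1)) with hεdef
    have hεpos : (0:ℝ) < ε := lt_min (by linarith) (by positivity)
    have hεδ : ε < δ := (min_le_left _ _).trans_lt (by linarith)
    have hεM : ∀ ω, ε * |Z ω| ≤ M'/(M'+1) := by
      intro ω
      calc ε * |Z ω| ≤ (1/(M'+1)) * M' :=
            mul_le_mul (min_le_right _ _) (hM' ω) (abs_nonneg _) (by positivity)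
        _ = M'/(M'+1) := by ring
    set Q : L2 μ := I + ε • Z with hQdef
    have hQc : ⇑Q = fun ω => 1 + ε * Z ω := by
      have h1 : ⇑Q = ⇑I + ⇑(ε • Z) := aux14_ae_eq μ hatoms (Lp.coeFn_add _ _)
      have h2 : ⇑(ε • Z) = ε • ⇑Z := aux14_ae_eq μ hatoms (Lp.coeFn_smul _ _)
      rw [h1, h2, hIc]; rfl
    have hQnn : (0 : Ω → ℝ) ≤ᵐ[μ] ⇑Q := by
      refine Filter.Eventually.of_forall fun ω => ?_
      rw [hQc]
      have h1 := hεM ω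
      have h2 : -(ε * |Z ω|) ≤ ε * Z ω := by
        have := neg_abs_le (Z ω)
        nlinarith
      have h3 : M'/(M'+1) ≤ 1 := by
        rw [div_le_one (by positivity)]; linarith
      simp only [Pi.zero_apply]
      linarith
    have hIQ : ⟪I, Q⟫ = 1 := by
      rw [hQdef, inner_add_right, real_inner_smul_right, hII, real_inner_comm Z I, hZI]
      ring
    have hQint : ∫ ω, Q ω ∂μ = 1 := by
      have := aux14_inner_one μ hatoms Q
      rw [real_inner_comm] at hIQ
      rw [← this, hIQ]
    have hQmem : Q ∈ densities μ := ⟨hQnn, hQint⟩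
    have hQnorm : ‖Q - I‖ < δ := by
      have : Q - I = ε • Z := by rw [hQdef]; abel
      rw [this, norm_smul, hZnorm, Real.norm_eq_abs, abs_of_pos hεpos, mul_one]
      exact hεδ
    have hQ𝒬 : Q ∈ 𝒬 := hball Q hQmem hQnorm
    -- compute the pairing
    have hXY : ⟪X, Y⟫ = ‖Y‖^2 := by
      have hXeq : X = Y + constL2 μ m := by rw [hYdef]; abel
      have hIY : ⟪constL2 μ m, Y⟫ = 0 := by
        rw [aux14_const_smul μ hatoms, real_inner_smul_left, real_inner_comm, hYI, mul_zero]
      nth_rewrite 1 [hXeq]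
      rw [inner_add_left, real_inner_self_eq_norm_sq, hIY]
      ring
    have hXZ : ⟪X, Z⟫ = ‖Y‖ := by
      rw [hZdef, real_inner_smul_right, hXY]
      field_simp
    have hpair : pairing μ X Q = m + ε * ‖Y‖ := by
      rw [aux14_pairing, hQdef, inner_add_right, real_inner_smul_right, hXI, hXZ]
    rw [henv X]
    refine lt_of_lt_of_le ?_ (le_iSup₂_of_le Q hQ𝒬 le_rfl)
    rw [hpair]
    exact_mod_cast EReal.coe_lt_coe_iff.mpr (by nlinarith)
end
end

section
/- Let 0 ≤ γ₂ < 1 < γ₁ and define S_r(X) := inf_{β ∈ ℝ} { β + E[γ₁(X−β)₊ − γ₂(β−X)₊] } for X ∈ L². Then S_r(X) ≥ E[X] for every X ∈ L², and S_r(X) = E[X] if and only if X is a.s. equal to a constant. Consequently the OCE-type risk measure S_r is averse. -/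
open MeasureTheory Filter Topology

noncomputable section

variable {Ω : Type*} [MeasurableSpace Ω] (μ : Measure Ω) [IsProbabilityMeasure μ]

/-- for `0 ≤ γ₂ < 1 < γ₁`, the OCE-type risk measure
`S_r(X) = inf_β {β + E[γ₁(X−β)₊ − γ₂(β−X)₊]}` satisfies `S_r(X) ≥ E[X]`, with equality if
and only if `X` is a.s. constant; consequently `S_r` is averse. -/
theorem stmt_15 (γ₁ γ₂ : ℝ) (h2 : 0 ≤ γ₂) (h21 : γ₂ < 1) (h1 : 1 < γ₁) (X : L2 μ) :
    ∃ m : ℝ,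
      IsGLB {e : ℝ | ∃ β : ℝ,
          e = β + ∫ ω, (γ₁ * max (X ω - β) 0 - γ₂ * max (β - X ω) 0) ∂μ} m ∧
      (∫ ω, X ω ∂μ) ≤ m ∧
      (m = ∫ ω, X ω ∂μ ↔ ∃ c : ℝ, ⇑X =ᵐ[μ] fun _ => c) := by
  classical
  set e : ℝ := ∫ ω, X ω ∂μ with he
  have hXint : Integrable (⇑X) μ := (Lp.memLp X).integrable (by norm_num)
  have hpos : ∀ β : ℝ, Integrable (fun ω => max (X ω - β) 0) μ := fun β =>
    (hXint.sub (integrable_const β)).pos_part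
  have hneg : ∀ β : ℝ, Integrable (fun ω => max (β - X ω) 0) μ := fun β =>
    ((integrable_const β).sub hXint).pos_part
  have hgint : ∀ β : ℝ,
      Integrable (fun ω => (γ₁ - 1) * max (X ω - β) 0 + (1 - γ₂) * max (β - X ω) 0) μ :=
    fun β => ((hpos β).const_mul _).add ((hneg β).const_mul _)
  have hgnn : ∀ (β : ℝ) (ω : Ω),
      0 ≤ (γ₁ - 1) * max (X ω - β) 0 + (1 - γ₂) * max (β - X ω) 0 := by
    intro β ω
    have := le_max_right (X ω - β) 0
    have := le_max_right (β - X ω) 0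
    nlinarith
  have key : ∀ β : ℝ, β + ∫ ω, (γ₁ * max (X ω - β) 0 - γ₂ * max (β - X ω) 0) ∂μ
      = e + ∫ ω, ((γ₁ - 1) * max (X ω - β) 0 + (1 - γ₂) * max (β - X ω) 0) ∂μ := by
    intro β
    have hpt : ∀ ω, γ₁ * max (X ω - β) 0 - γ₂ * max (β - X ω) 0
        = (X ω - β) + ((γ₁ - 1) * max (X ω - β) 0 + (1 - γ₂) * max (β - X ω) 0) := by
      intro ω
      rcases le_total (X ω) β with h | h
      · rw [max_eq_right (by linarith : X ω - β ≤ 0), max_eq_left (by linarith : 0 ≤ β - X ω)]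
        ring
      · rw [max_eq_left (by linarith : 0 ≤ X ω - β), max_eq_right (by linarith : β - X ω ≤ 0)]
        ring
    calc β + ∫ ω, (γ₁ * max (X ω - β) 0 - γ₂ * max (β - X ω) 0) ∂μ
        = β + ∫ ω, ((X ω - β)
            + ((γ₁ - 1) * max (X ω - β) 0 + (1 - γ₂) * max (β - X ω) 0)) ∂μ := by
          congr 1; exact integral_congr_ae (Eventually.of_forall fun ω => hpt ω)
      _ = β + ((∫ ω, (X ω - β) ∂μ)
            + ∫ ω, ((γ₁ - 1) * max (X ω - β) 0 + (1 - γ₂) * max (β - X ω) 0) ∂μ) := by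
          have hsub : Integrable (fun ω => X ω - β) μ := hXint.sub (integrable_const β)
          rw [integral_add hsub (hgint β)]
      _ = _ := by
          rw [integral_sub hXint (integrable_const β), integral_const]
          simp [← he]
          ring
  set S : Set ℝ := {s : ℝ | ∃ β : ℝ,
      s = β + ∫ ω, (γ₁ * max (X ω - β) 0 - γ₂ * max (β - X ω) 0) ∂μ} with hS
  have hIne : ∀ β : ℝ,
      0 ≤ ∫ ω, ((γ₁ - 1) * max (X ω - β) 0 + (1 - γ₂) * max (β - X ω) 0) ∂μ := fun β =>
    integral_nonneg (hgnn β)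
  have hlb : ∀ s ∈ S, e ≤ s := by
    rintro s ⟨β, rfl⟩
    rw [key β]
    linarith [hIne β]
  have hne : S.Nonempty := ⟨_, 0, rfl⟩
  have hbdd : BddBelow S := ⟨e, hlb⟩
  refine ⟨sInf S, Real.isGLB_sInf hne hbdd, le_csInf hne hlb, ?_⟩
  constructor
  · intro hm
    by_contra hnc
    push_neg at hnc
    set D : ℝ := ∫ ω, |X ω - e| ∂μ with hD
    have hDint : Integrable (fun ω => |X ω - e|) μ := (hXint.sub (integrable_const e)).abs
    have hDnn : 0 ≤ D := integral_nonneg fun ω => abs_nonneg _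
    have hDpos : 0 < D := by
      rcases lt_or_eq_of_le hDnn with h | h
      · exact h
      · exfalso
        have h0 : (fun ω => |X ω - e|) =ᵐ[μ] 0 := by
          rw [← integral_eq_zero_iff_of_nonneg (fun ω => abs_nonneg _) hDint]
          exact h.symm
        refine hnc e ?_
        filter_upwards [h0] with ω hω
        have : |X ω - e| = 0 := hω
        have : X ω - e = 0 := abs_eq_zero.mp this
        linarith
    set κ : ℝ := min (γ₁ - 1) (1 - γ₂) with hκ
    have hκpos : 0 < κ := lt_min (by linarith) (by linarith)
    have hlow : ∀ β : ℝ, e + κ * (D / 2) ≤ e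
        + ∫ ω, ((γ₁ - 1) * max (X ω - β) 0 + (1 - γ₂) * max (β - X ω) 0) ∂μ := by
      intro β
      have habsint : Integrable (fun ω => |X ω - β|) μ := (hXint.sub (integrable_const β)).abs
      have hI1 : κ * ∫ ω, |X ω - β| ∂μ
          ≤ ∫ ω, ((γ₁ - 1) * max (X ω - β) 0 + (1 - γ₂) * max (β - X ω) 0) ∂μ := by
        rw [← integral_const_mul]
        refine integral_mono (habsint.const_mul κ) (hgint β) fun ω => ?_
        have h1 : κ ≤ γ₁ - 1 := min_le_left _ _
        have h2 : κ ≤ 1 - γ₂ := min_le_right _ _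
        rcases le_total (X ω) β with h | h
        · rw [max_eq_right (by linarith : X ω - β ≤ 0),
            max_eq_left (by linarith : 0 ≤ β - X ω), abs_of_nonpos (by linarith : X ω - β ≤ 0)]
          nlinarith
        · rw [max_eq_left (by linarith : 0 ≤ X ω - β),
            max_eq_right (by linarith : β - X ω ≤ 0), abs_of_nonneg (by linarith : 0 ≤ X ω - β)]
          nlinarith
      have hI2 : D / 2 ≤ ∫ ω, |X ω - β| ∂μ := by
        have htri : D ≤ (∫ ω, |X ω - β| ∂μ) + |β - e| := by
          have : D ≤ ∫ ω, (|X ω - β| + |β - e|) ∂μ := by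
            refine integral_mono hDint (habsint.add (integrable_const _)) fun ω => ?_
            calc |X ω - e| = |(X ω - β) + (β - e)| := by ring_nf
              _ ≤ |X ω - β| + |β - e| := abs_add_le _ _
          rwa [integral_add habsint (integrable_const _), integral_const,
            probReal_univ, one_smul] at this
        have hbe : |β - e| ≤ ∫ ω, |X ω - β| ∂μ := by
          have h0 : β - e = ∫ ω, (β - X ω) ∂μ := by
            rw [integral_sub (integrable_const β) hXint, integral_const, probReal_univ,
              one_smul, ← he]
          rw [h0]
          calc |∫ ω, (β - X ω) ∂μ| ≤ ∫ ω, |β - X ω| ∂μ := by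
                simpa [Real.norm_eq_abs] using
                  norm_integral_le_integral_norm (fun ω => β - X ω) (μ := μ)
            _ = ∫ ω, |X ω - β| ∂μ := by simp_rw [abs_sub_comm]
        linarith
        
      calc e + κ * (D / 2) ≤ e + κ * ∫ ω, |X ω - β| ∂μ := by
            have := mul_le_mul_of_nonneg_left hI2 hκpos.le
            linarith
        _ ≤ _ := by linarith [hI1]
    have hmge : e + κ * (D / 2) ≤ sInf S := by
      refine le_csInf hne ?_
      rintro s ⟨β, rfl⟩
      rw [key β]
      exact hlow β
    have : 0 < κ * (D / 2) := by positivity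
    rw [hm] at hmge
    linarith
  · rintro ⟨c, hc⟩
    have hec : e = c := by
      rw [he]
      rw [integral_congr_ae hc, integral_const, probReal_univ, one_smul]
    have hmem : e ∈ S := by
      refine ⟨c, ?_⟩
      have : ∫ ω, (γ₁ * max (X ω - c) 0 - γ₂ * max (c - X ω) 0) ∂μ = 0 := by
        rw [integral_congr_ae (g := fun _ => (0 : ℝ))]
        · simp
        · filter_upwards [hc] with ω hω
          simp [hω]
      rw [this, hec]
      ring
    exact le_antisymm (csInf_le hbdd hmem) (le_csInf hne hlb)
end
end

section
/- Let Ω = Ω₁ ∪ ⋯ ∪ Ω_r be a partition of Ω into measurable sets with P₀(Ω_k) > 0 for each k and r ≥ 2, and let λ₁,…,λ_r > 0 with λ₁+⋯+λ_r = 1. Define the risk measure from subdividing the future ℛ(X) := Σ_{k=1}^r λ_k · inf{a ∈ ℝ : P₀({X > a} ∩ Ω_k) = 0}. Then ℛ is not averse: there exists X ∈ L², not a.s. equal to a constant, with ℛ(X) ≤ E[X]. -/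
open MeasureTheory Filter Topology

noncomputable section

variable {Ω : Type*} [MeasurableSpace Ω] (μ : Measure Ω) [IsProbabilityMeasure μ]

lemma ereal_coe_sum {n : ℕ} (g : Fin n → ℝ) :
    (∑ k, ((g k : ℝ) : EReal)) = ((∑ k, g k : ℝ) : EReal) := by
  induction n with
  | zero => simp
  | succ m ih =>
    rw [Fin.sum_univ_succ, Fin.sum_univ_succ, EReal.coe_add, ih]

lemma stmt_17_aux {Ω : Type*} [MeasurableSpace Ω] (μ : Measure Ω) [IsProbabilityMeasure μ]
    {r : ℕ} (P : Fin r → Set Ω)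
    (hmeas : ∀ k, MeasurableSet (P k))
    (hdisj : Pairwise (Function.onFun Disjoint P))
    (hpos : ∀ k, 0 < μ (P k))
    (l : Fin r → ℝ) (a : Fin r → ℝ)
    (hne : ∃ i j, a i ≠ a j)
    (hineq : ∑ k, l k * a k ≤ ∑ k, a k * (μ (P k)).toReal) :
    ∃ X : L2 μ, (¬ ∃ c : ℝ, ⇑X =ᵐ[μ] fun _ => c) ∧
      (∑ k, (l k : EReal) *
          sInf {y : EReal | ∃ a : ℝ, y = (a : EReal) ∧ μ ({ω | a < X ω} ∩ P k) = 0})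
        ≤ ((∫ ω, X ω ∂μ : ℝ) : EReal) := by
  classical
  set f : Ω → ℝ := fun ω => ∑ k, (P k).indicator (fun _ => a k) ω with hf
  have hval : ∀ k, ∀ ω ∈ P k, f ω = a k := by
    intro k ω hω
    show (∑ j, (P j).indicator (fun _ => a j) ω) = a k
    rw [Finset.sum_eq_single k]
    · simp [Set.indicator_of_mem hω]
    · intro j _ hjk
      have : ω ∉ P j := fun hj => (hdisj hjk).le_bot ⟨hj, hω⟩
      simp [Set.indicator_of_notMem this]
    · simp
  have hfm : Measurable f := by
    apply Finset.measurable_sum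
    intro k _
    exact (measurable_const.indicator (hmeas k))
  have hbound : ∀ ω, ‖f ω‖ ≤ ∑ k, ‖a k‖ := by
    intro ω
    calc ‖f ω‖ ≤ ∑ k, ‖(P k).indicator (fun _ => a k) ω‖ := norm_sum_le _ _
    _ ≤ ∑ k, ‖a k‖ := by
        apply Finset.sum_le_sum
        intro k _
        by_cases h : ω ∈ P k <;> simp [Set.indicator_of_mem, Set.indicator_of_notMem, h,
          abs_nonneg]
  have hmem : MemLp f 2 μ :=
    MemLp.of_bound hfm.aestronglyMeasurable _ (Filter.Eventually.of_forall hbound)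
  refine ⟨hmem.toLp f, ?_, ?_⟩
  · -- not a.e. constant
    rintro ⟨c, hc⟩
    have hXf : ⇑(hmem.toLp f) =ᵐ[μ] f := MemLp.coeFn_toLp hmem
    have hfc : f =ᵐ[μ] fun _ => c := hXf.symm.trans hc
    have hconst : ∀ k, a k = c := by
      intro k
      by_contra hak
      have hsub : P k ⊆ {ω | ¬ f ω = (fun _ => c) ω} := by
        intro ω hω
        simp only [Set.mem_setOf_eq]
        rw [hval k ω hω]
        exact hak
      have : μ (P k) = 0 :=
        measure_mono_null hsub (by simpa [Filter.EventuallyEq, ae_iff] using hfc)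
      exact absurd this (hpos k).ne'
    obtain ⟨i, j, hij⟩ := hne
    exact hij ((hconst i).trans (hconst j).symm)
  · -- the inequality
    have hXf : ⇑(hmem.toLp f) =ᵐ[μ] f := MemLp.coeFn_toLp hmem
    have hnull : μ {ω | (hmem.toLp f : L2 μ) ω ≠ f ω} = 0 := by
      simpa [Filter.EventuallyEq, ae_iff] using hXf
    have hsInf : ∀ k, sInf {y : EReal | ∃ a' : ℝ, y = (a' : EReal) ∧
        μ ({ω | a' < (hmem.toLp f : L2 μ) ω} ∩ P k) = 0} = ((a k : ℝ) : EReal) := by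
      intro k
      apply le_antisymm
      · apply sInf_le
        refine ⟨a k, rfl, ?_⟩
        apply measure_mono_null _ hnull
        rintro ω ⟨hlt, hω⟩
        simp only [Set.mem_setOf_eq] at hlt ⊢
        intro heq
        rw [heq, hval k ω hω] at hlt
        exact lt_irrefl _ hlt
      · apply le_sInf
        rintro y ⟨a', rfl, hnull'⟩
        rw [EReal.coe_le_coe_iff]
        by_contra hlt
        push_neg at hlt
        have hsub : P k ⊆ ({ω | a' < (hmem.toLp f : L2 μ) ω} ∩ P k) ∪
            {ω | (hmem.toLp f : L2 μ) ω ≠ f ω} := by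
          intro ω hω
          by_cases h : (hmem.toLp f : L2 μ) ω = f ω
          · left
            refine ⟨?_, hω⟩
            simp only [Set.mem_setOf_eq]
            rw [h, hval k ω hω]
            exact hlt
          · right; exact h
        have : μ (P k) = 0 := by
          have := (measure_mono (μ := μ) hsub).trans (measure_union_le _ _)
          rw [hnull', hnull] at this
          simpa using this
        exact absurd this (hpos k).ne'
    calc ∑ k, (l k : EReal) *
          sInf {y : EReal | ∃ a' : ℝ, y = (a' : EReal) ∧
            μ ({ω | a' < (hmem.toLp f : L2 μ) ω} ∩ P k) = 0}
        = ∑ k, ((l k * a k : ℝ) : EReal) := by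
          apply Finset.sum_congr rfl
          intro k _
          rw [hsInf k, ← EReal.coe_mul]
      _ = ((∑ k, l k * a k : ℝ) : EReal) := ereal_coe_sum _
      _ ≤ ((∫ ω, (hmem.toLp f : L2 μ) ω ∂μ : ℝ) : EReal) := by
          rw [EReal.coe_le_coe_iff]
          have hint : ∫ ω, (hmem.toLp f : L2 μ) ω ∂μ = ∫ ω, f ω ∂μ := integral_congr_ae hXf
          have hintf : ∫ ω, f ω ∂μ = ∑ k, a k * (μ (P k)).toReal := by
            rw [hf]
            rw [integral_finset_sum _ (fun k _ => (integrable_const (a k)).indicator (hmeas k))]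
            apply Finset.sum_congr rfl
            intro k _
            rw [integral_indicator_const _ (hmeas k)]
            simp [mul_comm, measureReal_def]
          rw [hint, hintf]
          exact hineq

/-- the risk measure from subdividing the future,
`ℛ(X) = Σ_k λ_k · ess sup_{ω ∈ Ω_k} X(ω)` (valued in `(-∞,+∞]`, with `inf ∅ = +∞` for
each essential supremum), is not averse when `r ≥ 2`: some nonconstant `X ∈ L²` has
`ℛ(X) ≤ E[X]`. -/
theorem stmt_17 {r : ℕ} (hr : 2 ≤ r) (P : Fin r → Set Ω)
    (hmeas : ∀ k, MeasurableSet (P k))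
    (hdisj : Pairwise (Function.onFun Disjoint P))
    (hcover : (⋃ k, P k) = Set.univ)
    (hpos : ∀ k, 0 < μ (P k))
    (l : Fin r → ℝ) (hl : ∀ k, 0 < l k) (hsum : ∑ k, l k = 1) :
    ∃ X : L2 μ, (¬ ∃ c : ℝ, ⇑X =ᵐ[μ] fun _ => c) ∧
      (∑ k, (l k : EReal) *
          sInf {y : EReal | ∃ a : ℝ, y = (a : EReal) ∧ μ ({ω | a < X ω} ∩ P k) = 0})
        ≤ ((∫ ω, X ω ∂μ : ℝ) : EReal) := by
  classical
  have hfin : ∀ k, μ (P k) ≠ ⊤ := fun k => (measure_lt_top μ (P k)).ne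
  have htot : ∑ k, (μ (P k)).toReal = 1 := by
    have h1 : ∑ k, μ (P k) = 1 := by
      rw [← tsum_fintype (L := SummationFilter.unconditional _), ← measure_iUnion hdisj hmeas, hcover, measure_univ]
    have := congrArg ENNReal.toReal h1
    rwa [ENNReal.toReal_sum (fun k _ => hfin k), ENNReal.toReal_one] at this
  by_cases hd : ∀ k, (μ (P k)).toReal = l k
  · -- use a k = k
    apply stmt_17_aux μ P hmeas hdisj hpos l (fun k => (k : ℝ))
    · refine ⟨⟨0, by omega⟩, ⟨1, by omega⟩, ?_⟩
      norm_num
    · apply le_of_eq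
      apply Finset.sum_congr rfl
      intro k _
      rw [hd k, mul_comm]
  · -- use a k = μ_k - l k
    push_neg at hd
    obtain ⟨k0, hk0⟩ := hd
    set a : Fin r → ℝ := fun k => (μ (P k)).toReal - l k with ha
    apply stmt_17_aux μ P hmeas hdisj hpos l a
    · by_contra h
      push_neg at h
      have hall : ∀ i j, a i = a j := h
      have hsa : ∑ k, a k = 0 := by
        rw [ha]
        simp only [Finset.sum_sub_distrib, htot, hsum, sub_self]
      have : ∑ k, a k = r * a k0 := by
        rw [Finset.sum_congr rfl (fun k _ => hall k k0)]
        simp [mul_comm]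
      rw [hsa] at this
      have hr0 : (r : ℝ) ≠ 0 := by positivity
      have : a k0 = 0 := by
        field_simp at this
        rcases mul_eq_zero.mp (by linarith : (r : ℝ) * a k0 = 0) with h | h
        · exact absurd h (by exact_mod_cast (by omega : r ≠ 0))
        · exact h
      exact hk0 (by linarith [sub_eq_zero.mp this])
    · have : ∀ k, a k * (μ (P k)).toReal - l k * a k = a k * a k := by
        intro k
        rw [ha]
        ring
      have hnn : 0 ≤ ∑ k, (a k * (μ (P k)).toReal - l k * a k) := by
        rw [Finset.sum_congr rfl (fun k _ => this k)]
        exact Finset.sum_nonneg (fun k _ => mul_self_nonneg _)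
      rw [Finset.sum_sub_distrib] at hnn
      linarith
end
end
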